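/- If a linear code C in F_q^n has a t-error-correcting pair (A,B), then the minimum distance of C is at least 2t+1. -/

import Mathlib

open Matrix Module

/-- The span of all coordinatewise (star) products of elements of `A` and `B`. -/
def starSpan {F : Type*} [Field F] {n : ℕ} (A B : Submodule F (Fin n → F)) :
    Submodule F (Fin n → F) :=
  Submodule.span F {x | ∃ a ∈ A, ∃ b ∈ B, x = a * b}

/-- The dual code, with respect to the standard inner product. -/
def dualCode {F : Type*} [Field F] {n : ℕ} (C : Submodule F (Fin n → F)) :
    Submodule F (Fin n → F) where
  carrier := {x | ∀ c ∈ C, x ⬝ᵥ c = 0}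
  add_mem' := by
    intro a b ha hb c hc
    simp [add_dotProduct, ha c hc, hb c hc]
  zero_mem' := by
    intro c hc
    simp
  smul_mem' := by
    intro r a ha c hc
    simp [smul_dotProduct, ha c hc]

/-- Minimum Hamming distance (= minimum weight of a nonzero codeword) of a linear code. -/
noncomputable def minDist {F : Type*} [Field F] [DecidableEq F] {n : ℕ}
    (C : Submodule F (Fin n → F)) : ℕ :=
  sInf {w | ∃ c ∈ C, c ≠ 0 ∧ w = hammingNorm c}

/-- `(A, B)` is a `t`-error-correcting pair for the code `C` over `F`, where `A` and `B` are
codes over an extension field `K` of `F`: (E.1) `(A*B) ⊥ C`; (E.2) `dim A > t`;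
(E.3) `d(B^⊥) > t`; (E.4) `d(A) + d(C) > n`. -/
def IsECP (F K : Type*) [Field F] [Field K] [Algebra F K] [DecidableEq F] [DecidableEq K]
    {n : ℕ} (t : ℕ) (A B : Submodule K (Fin n → K)) (C : Submodule F (Fin n → F)) : Prop :=
  (∀ a ∈ A, ∀ b ∈ B, ∀ c ∈ C, (a * b) ⬝ᵥ (fun i => algebraMap F K (c i)) = 0) ∧
  t < finrank K A ∧
  t < minDist (dualCode B) ∧
  n < minDist A + minDist C

/-- The generalized Reed–Solomon code `GRS_k(a, b)`. -/
def GRS (F : Type*) [Field F] {n : ℕ} (k : ℕ) (a b : Fin n → F) : Submodule F (Fin n → F) :=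
  Submodule.span F
    {v | ∃ f : Polynomial F, f.degree < (k : WithBot ℕ) ∧ v = fun i => f.eval (a i) * b i}

private lemma minDist_le' {F : Type*} [Field F] [DecidableEq F] {n : ℕ}
    {C : Submodule F (Fin n → F)} {c : Fin n → F} (hc : c ∈ C) (h0 : c ≠ 0) :
    minDist C ≤ hammingNorm c :=
  Nat.sInf_le ⟨c, hc, h0, rfl⟩

private lemma exists_vanishing' {K : Type*} [Field K] {n t : ℕ} (A : Submodule K (Fin n → K))
    (ht : t < finrank K A) (I : Finset (Fin n)) (hI : I.card = t) :
    ∃ a ∈ A, a ≠ 0 ∧ ∀ i ∈ I, a i = 0 := by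
  set φ : A →ₗ[K] (I → K) := LinearMap.pi (fun i => (LinearMap.proj i.1).comp A.subtype) with hφ
  have hker : LinearMap.ker φ ≠ ⊥ := by
    intro hk
    have := LinearMap.finrank_le_finrank_of_injective (LinearMap.ker_eq_bot.mp hk)
    rw [Module.finrank_pi, Fintype.card_coe, hI] at this
    omega
  obtain ⟨a, ha, h0⟩ := (Submodule.ne_bot_iff _).mp hker
  refine ⟨a, a.2, by simpa using h0, fun i hi => ?_⟩
  have := congrFun (LinearMap.mem_ker.mp ha) ⟨i, hi⟩
  simpa [φ] using this

private lemma hammingNorm_le_card' {K : Type*} [DecidableEq K] [Zero K] {n : ℕ}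
    (x : Fin n → K) : hammingNorm x ≤ n := by
  simpa [hammingNorm] using Finset.card_filter_le Finset.univ (fun i => x i ≠ 0)

open Finset in
private lemma key_weight_bound {F K : Type*} [Field F] [Field K] [Algebra F K] [DecidableEq F]
    [DecidableEq K] {n t : ℕ} (A B : Submodule K (Fin n → K)) (C : Submodule F (Fin n → F))
    (h : IsECP F K t A B C) {c : Fin n → F} (hc : c ∈ C) (h0 : c ≠ 0) :
    2 * t + 1 ≤ hammingNorm c := by
  obtain ⟨hE1, hE2, hE3, hE4⟩ := h
  by_contra hcon
  push_neg at hcon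
  have hw : hammingNorm c ≤ 2 * t := by omega
  set S : Finset (Fin n) := {i | c i ≠ 0} with hS
  have hScard : S.card = hammingNorm c := rfl
  have hwn : hammingNorm c ≤ n := hammingNorm_le_card' c
  have htn : t ≤ n := by
    have h1 : finrank K A ≤ finrank K (Fin n → K) := Submodule.finrank_le A
    rw [Module.finrank_pi, Fintype.card_fin] at h1
    omega
  -- choose S' ⊆ S of size min t (wt c), then extend to I of size t
  obtain ⟨S', hS'S, hS'card⟩ := Finset.exists_subset_card_eq
    (show min t (hammingNorm c) ≤ S.card by rw [hScard]; omega)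
  obtain ⟨I, hS'I, hIuniv, hIcard⟩ := Finset.exists_subsuperset_card_eq
    (Finset.subset_univ S') (show S'.card ≤ t by rw [hS'card]; omega)
    (by simpa using htn)
  obtain ⟨a, haA, ha0, haI⟩ := exists_vanishing' A hE2 I hIcard
  set c' : Fin n → K := fun i => algebraMap F K (c i) with hc'
  set z : Fin n → K := fun i => a i * c' i with hz
  -- z is in the dual of B
  have hzB : z ∈ dualCode B := by
    intro b hb
    have h1 := hE1 a haA b hb c hc
    rw [← h1]
    simp only [dotProduct, Pi.mul_apply]
    exact Finset.sum_congr rfl fun i _ => by ring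
  -- z has small weight
  have hzwt : hammingNorm z ≤ t := by
    have hsub : ({i | z i ≠ 0} : Finset (Fin n)) ⊆ S \ S' := by
      intro i hi
      simp only [mem_filter, mem_univ, true_and] at hi
      have hai : a i ≠ 0 := fun h => hi (by simp [hz, h])
      have hci : c' i ≠ 0 := fun h => hi (by simp [hz, h])
      have hciF : c i ≠ 0 := fun h => hci (by simp [hc', h])
      refine Finset.mem_sdiff.mpr ⟨by simpa [hS] using hciF, fun hmem => ?_⟩
      exact hai (haI i (hS'I hmem))
    calc hammingNorm z ≤ (S \ S').card := Finset.card_le_card hsub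
      _ = S.card - S'.card := Finset.card_sdiff_of_subset hS'S
      _ ≤ t := by rw [hScard, hS'card]; omega
  -- hence z = 0
  have hz0 : z = 0 := by
    by_contra hz0
    exact absurd (minDist_le' hzB hz0) (by omega)
  -- so a vanishes on S
  have haS : ∀ i ∈ S, a i = 0 := by
    intro i hi
    have hci : c i ≠ 0 := by simpa [hS] using hi
    have := congrFun hz0 i
    simp only [hz, Pi.zero_apply] at this
    rcases mul_eq_zero.mp this with h1 | h1
    · exact h1
    · exact absurd ((algebraMap F K).injective (by simpa [hc'] using h1)) hci
  -- so wt a ≤ n - wt c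
  have hawt : hammingNorm a ≤ n - hammingNorm c := by
    have hsub : ({i | a i ≠ 0} : Finset (Fin n)) ⊆ Sᶜ := by
      intro i hi
      simp only [mem_filter, mem_univ, true_and] at hi
      exact Finset.mem_compl.mpr fun hmem => hi (haS i hmem)
    calc hammingNorm a ≤ Sᶜ.card := Finset.card_le_card hsub
      _ = n - hammingNorm c := by rw [Finset.card_compl, hScard, Fintype.card_fin]
  have h1 : minDist A ≤ n - hammingNorm c := le_trans (minDist_le' haA ha0) hawt
  have h2 : minDist C ≤ hammingNorm c := minDist_le' hc h0
  omega

/-- If a linear code `C ⊆ F^n` has a `t`-error-correcting pair `(A, B)` (over an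
extension field `K`), then the minimum distance of `C` is at least `2t + 1`. -/
theorem stmt3 {F K : Type*} [Field F] [Field K] [Algebra F K] [DecidableEq F] [DecidableEq K]
    {n t : ℕ} (A B : Submodule K (Fin n → K)) (C : Submodule F (Fin n → F))
    (h : IsECP F K t A B C) :
    2 * t + 1 ≤ minDist C := by
  by_cases hne : {w | ∃ c ∈ C, c ≠ 0 ∧ w = hammingNorm c}.Nonempty
  · obtain ⟨c, hc, h0, hw⟩ := Nat.sInf_mem hne
    rw [minDist, hw]
    exact key_weight_bound A B C h hc h0
  · exfalso
    obtain ⟨hE1, hE2, hE3, hE4⟩ := h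
    rw [Set.not_nonempty_iff_eq_empty] at hne
    have hC0 : minDist C = 0 := by rw [minDist, hne, Nat.sInf_empty]
    -- A is nonzero, so minDist A ≤ n
    have hA : A ≠ ⊥ := by
      intro hA
      rw [hA, finrank_bot] at hE2
      omega
    obtain ⟨a, haA, ha0⟩ := (Submodule.ne_bot_iff _).mp hA
    have h1 : minDist A ≤ n := le_trans (minDist_le' haA ha0) (hammingNorm_le_card' a)
    omega
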